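/- Let n, l, d ≥ 1 and r ≥ 1 be integers, and let s : ℂⁿ × ℂˡ → ℂ^d be a continuously (complex) differentiable map. Let x₀ ∈ ℂⁿ and let v_1, …, v_d ∈ ℂˡ be vectors such that the partial derivatives D₂s(x₀, 0)(v_1), …, D₂s(x₀, 0)(v_d) of s in the second variable at the point (x₀, 0) form a basis of ℂ^d. Then there exists an open neighbourhood U of (x₀, 0) in ℂⁿ × ℂˡ such that for every (x, t) ∈ U with t_1 ≠ 0, the map ℂ^d → ℂ^d given by ζ = (ζ_1, …, ζ_d) ↦ s(x, t + t_1^r (ζ_1 v_1 + ⋯ + ζ_d v_d)) has invertible (in particular surjective) Fréchet derivative at ζ = 0. -/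

import Mathlib

/-- Chart-level content of Lemma 2.3: if `s : ℂⁿ × ℂˡ → ℂ^d` is `C¹` over `ℂ` and the
partial derivatives `D₂s(x₀,0)(v₁), …, D₂s(x₀,0)(v_d)` form a basis of `ℂ^d`, then for all
`(x,t)` near `(x₀,0)` with `t₁ ≠ 0`, the map `ζ ↦ s(x, t + t₁^r ∑ᵢ ζᵢ vᵢ)` has invertible
(in particular surjective) Fréchet derivative at `ζ = 0`. -/
theorem local_spray_domination (n l d r : ℕ) [NeZero n] [NeZero l] [NeZero d] (hr : 1 ≤ r)
    (s : (Fin n → ℂ) × (Fin l → ℂ) → Fin d → ℂ) (hs : ContDiff ℂ 1 s)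
    (x₀ : Fin n → ℂ) (v : Fin d → Fin l → ℂ)
    (hindep : LinearIndependent ℂ
      (fun i => fderiv ℂ (fun u : Fin l → ℂ => s (x₀, u)) 0 (v i)))
    (hspan : Submodule.span ℂ
      (Set.range fun i => fderiv ℂ (fun u : Fin l → ℂ => s (x₀, u)) 0 (v i)) = ⊤) :
    ∃ U : Set ((Fin n → ℂ) × (Fin l → ℂ)), IsOpen U ∧ (x₀, (0 : Fin l → ℂ)) ∈ U ∧
      ∀ (x : Fin n → ℂ) (t : Fin l → ℂ), (x, t) ∈ U → t 0 ≠ 0 →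
        Function.Bijective
          (fderiv ℂ (fun ζ : Fin d → ℂ => s (x, t + (t 0) ^ r • ∑ i, ζ i • v i)) 0) := by
  have hdiff : Differentiable ℂ s := hs.differentiable one_ne_zero
  -- partial derivative in second variable as a composition
  have hpart : ∀ (x : Fin n → ℂ) (t : Fin l → ℂ),
      fderiv ℂ (fun u : Fin l → ℂ => s (x, u)) t
        = (fderiv ℂ s (x, t)).comp (ContinuousLinearMap.inr ℂ _ _) := by
    intro x t
    have h1 : HasFDerivAt (fun u : Fin l → ℂ => (x, u))
        (ContinuousLinearMap.inr ℂ (Fin n → ℂ) (Fin l → ℂ)) t := hasFDerivAt_prodMk_right x t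
    have h2 : HasFDerivAt s (fderiv ℂ s (x, t)) (x, t) := (hdiff (x, t)).hasFDerivAt
    exact (h2.comp t h1).fderiv
  -- the family of vectors whose invertibility we track
  set w : ((Fin n → ℂ) × (Fin l → ℂ)) → Fin d → Fin d → ℂ :=
    fun p j => fderiv ℂ s p (0, v j) with hw
  set W : ((Fin n → ℂ) × (Fin l → ℂ)) → Matrix (Fin d) (Fin d) ℂ :=
    fun p => Matrix.of fun i j => w p j i with hW
  -- continuity of the determinant
  have hcf : Continuous (fderiv ℂ s) := hs.continuous_fderiv one_ne_zero
  have hWc : Continuous fun p => (W p).det := by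
    apply Continuous.matrix_det
    apply continuous_matrix
    intro i j
    exact (continuous_apply i).comp
      ((ContinuousLinearMap.apply ℂ (Fin d → ℂ) ((0 : Fin n → ℂ), v j)).continuous.comp hcf)
  set U : Set ((Fin n → ℂ) × (Fin l → ℂ)) := {p | (W p).det ≠ 0} with hU
  have hUopen : IsOpen U := isOpen_compl_singleton.preimage hWc
  -- determinant nonzero at the base point
  have hmem : (x₀, (0 : Fin l → ℂ)) ∈ U := by
    have hkey : ∀ j, fderiv ℂ (fun u : Fin l → ℂ => s (x₀, u)) 0 (v j)
        = w (x₀, 0) j := by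
      intro j; rw [hpart]; rfl
    have hkeyfun : w (x₀, 0) = fun j => fderiv ℂ (fun u : Fin l → ℂ => s (x₀, u)) 0 (v j) := by
      funext j; exact (hkey j).symm
    have hindep' : LinearIndependent ℂ (w (x₀, 0)) := by rw [hkeyfun]; exact hindep
    have hspan' : ⊤ ≤ Submodule.span ℂ (Set.range (w (x₀, 0))) := by
      rw [hkeyfun, hspan]
    let b : Module.Basis (Fin d) ℂ (Fin d → ℂ) := Module.Basis.mk hindep' hspan'
    have hdet : IsUnit ((Pi.basisFun ℂ (Fin d)).det b) := (Pi.basisFun ℂ (Fin d)).isUnit_det b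
    rw [Module.Basis.det_apply] at hdet
    have hWeq : W (x₀, 0) = (Pi.basisFun ℂ (Fin d)).toMatrix b := by
      ext i j
      simp [hW, Module.Basis.toMatrix, b, Module.Basis.mk_apply, Pi.basisFun_repr]
    simp only [hU, Set.mem_setOf_eq, hWeq]
    exact hdet.ne_zero
  refine ⟨U, hUopen, hmem, ?_⟩
  intro x t hxt h0
  set c : ℂ := (t 0) ^ r with hc
  have hcne : c ≠ 0 := pow_ne_zero r h0
  -- the linear map ζ ↦ ∑ ζ i • v i
  let Llin : (Fin d → ℂ) →ₗ[ℂ] (Fin l → ℂ) :=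
    ∑ i, (LinearMap.proj i : (Fin d → ℂ) →ₗ[ℂ] ℂ).smulRight (v i)
  have hLlin : ∀ ζ, Llin ζ = ∑ i, ζ i • v i := by
    intro ζ; simp [Llin, LinearMap.sum_apply]
  let L : (Fin d → ℂ) →L[ℂ] (Fin l → ℂ) := LinearMap.toContinuousLinearMap Llin
  let K : (Fin d → ℂ) →L[ℂ] (Fin l → ℂ) := c • L
  have hKapp : ∀ ζ, K ζ = c • ∑ i, ζ i • v i := by
    intro ζ
    simp only [K, ContinuousLinearMap.smul_apply]
    rw [show L ζ = Llin ζ from rfl, hLlin]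
  -- chain rule
  have hh : HasFDerivAt (fun ζ : Fin d → ℂ => ((x, t + K ζ) : (Fin n → ℂ) × (Fin l → ℂ)))
      ((0 : (Fin d → ℂ) →L[ℂ] (Fin n → ℂ)).prod K) 0 :=
    HasFDerivAt.prodMk (hasFDerivAt_const x (0 : Fin d → ℂ)) ((K.hasFDerivAt).const_add t)
  have hK0 : K (0 : Fin d → ℂ) = 0 := by rw [hKapp]; simp
  have hpt : ((x, t + K 0) : (Fin n → ℂ) × (Fin l → ℂ)) = (x, t) := by rw [hK0]; simp
  set D : ((Fin n → ℂ) × (Fin l → ℂ)) →L[ℂ] (Fin d → ℂ) := fderiv ℂ s (x, t) with hD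
  have hsD : HasFDerivAt s D (x, t + K 0) := by rw [hpt]; exact (hdiff (x, t)).hasFDerivAt
  have hcomp : HasFDerivAt (fun ζ : Fin d → ℂ => s (x, t + K ζ))
      (D.comp ((0 : (Fin d → ℂ) →L[ℂ] (Fin n → ℂ)).prod K)) 0 :=
    hsD.comp 0 hh
  have heqfun : (fun ζ : Fin d → ℂ => s (x, t + (t 0) ^ r • ∑ i, ζ i • v i))
      = fun ζ : Fin d → ℂ => s (x, t + K ζ) := by
    funext ζ; rw [hKapp]
  have hfd : fderiv ℂ (fun ζ : Fin d → ℂ => s (x, t + (t 0) ^ r • ∑ i, ζ i • v i)) 0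
      = D.comp ((0 : (Fin d → ℂ) →L[ℂ] (Fin n → ℂ)).prod K) := by
    rw [heqfun]; exact hcomp.fderiv
  rw [hfd]
  -- identify the derivative with a matrix action
  set M : Matrix (Fin d) (Fin d) ℂ := c • W (x, t) with hM
  have happ : ∀ ζ, (D.comp ((0 : (Fin d → ℂ) →L[ℂ] (Fin n → ℂ)).prod K)) ζ = M.mulVec ζ := by
    intro ζ
    have : (D.comp ((0 : (Fin d → ℂ) →L[ℂ] (Fin n → ℂ)).prod K)) ζ
        = D (0, c • ∑ i, ζ i • v i) := by
      simp [ContinuousLinearMap.comp_apply, ContinuousLinearMap.prod_apply, hKapp]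
    rw [this]
    have : ((0 : Fin n → ℂ), c • ∑ i, ζ i • v i)
        = c • ∑ i, ζ i • (((0 : Fin n → ℂ), v i) : (Fin n → ℂ) × (Fin l → ℂ)) := by
      simp [Prod.smul_def, Prod.ext_iff, Finset.sum_apply]
      constructor
      · simp [Prod.fst_sum]
      · simp [Prod.snd_sum]
    rw [this, map_smul, map_sum]
    simp only [map_smul]
    funext i
    simp only [Matrix.mulVec, dotProduct, hM, Matrix.smul_apply, hW, Matrix.of_apply,
      Pi.smul_apply, Finset.sum_apply, smul_eq_mul]
    rw [Finset.mul_sum]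
    congr 1
    funext j
    simp [hw, smul_eq_mul]
    ring
  have hdetM : IsUnit M.det := by
    have : M.det = c ^ d * (W (x, t)).det := by
      rw [hM, Matrix.det_smul, Fintype.card_fin]
    rw [this]
    exact (IsUnit.mk0 _ (mul_ne_zero (pow_ne_zero d hcne) hxt))
  have hMunit : IsUnit M := M.isUnit_iff_isUnit_det.2 hdetM
  have hbij : Function.Bijective (M.mulVec) :=
    ⟨Matrix.mulVec_injective_iff_isUnit.2 hMunit, Matrix.mulVec_surjective_iff_isUnit.2 hMunit⟩
  have : ⇑(D.comp ((0 : (Fin d → ℂ) →L[ℂ] (Fin n → ℂ)).prod K)) = M.mulVec := funext happ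
  rw [this]
  exact hbij
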